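/- Let a(s) and b(s) be monic real Hurwitz stable polynomials of degree n, and c(s) a monic real polynomial of degree n-1 such that Re[c(jω)/a(jω)] > 0 and Re[c(jω)/b(jω)] > 0 for all real ω. Then for any monic real polynomial h(s) of degree n, there exists δ > 0 such that (c(s) + δ·h(s))/a(s) and (c(s) + δ·h(s))/b(s) are both strictly positive real. -/

import Mathlib

open Polynomial Complex

noncomputable def evalI (p : Polynomial ℝ) (ω : ℝ) : ℂ :=
  Polynomial.aeval ((ω : ℂ) * Complex.I) p

def HurwitzStable (p : Polynomial ℝ) : Prop :=
  ∀ z : ℂ, Polynomial.aeval z p = 0 → z.re < 0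


noncomputable def reP (p : Polynomial ℝ) : Polynomial ℝ :=
  ∑ k ∈ Finset.range (p.natDegree + 1), C (p.coeff k * (Complex.I ^ k).re) * X ^ k

noncomputable def imP (p : Polynomial ℝ) : Polynomial ℝ :=
  ∑ k ∈ Finset.range (p.natDegree + 1), C (p.coeff k * (Complex.I ^ k).im) * X ^ k

lemma coeff_reP (p : Polynomial ℝ) (m : ℕ) :
    (reP p).coeff m = p.coeff m * (Complex.I ^ m).re := by
  rw [reP, finset_sum_coeff]
  simp only [coeff_C_mul, coeff_X_pow, mul_ite, mul_one, mul_zero]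
  rw [Finset.sum_ite_eq (Finset.range (p.natDegree + 1)) m]
  split_ifs with hm
  · rfl
  · rw [p.coeff_eq_zero_of_natDegree_lt, zero_mul]
    simpa using Nat.lt_of_succ_le (not_lt.mp (by simpa using hm))

lemma coeff_imP (p : Polynomial ℝ) (m : ℕ) :
    (imP p).coeff m = p.coeff m * (Complex.I ^ m).im := by
  rw [imP, finset_sum_coeff]
  simp only [coeff_C_mul, coeff_X_pow, mul_ite, mul_one, mul_zero]
  rw [Finset.sum_ite_eq (Finset.range (p.natDegree + 1)) m]
  split_ifs with hm
  · rfl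
  · rw [p.coeff_eq_zero_of_natDegree_lt, zero_mul]
    simpa using Nat.lt_of_succ_le (not_lt.mp (by simpa using hm))

lemma natDegree_reP_le (p : Polynomial ℝ) : (reP p).natDegree ≤ p.natDegree :=
  natDegree_le_iff_coeff_eq_zero.mpr fun N hN => by
    rw [coeff_reP, p.coeff_eq_zero_of_natDegree_lt hN, zero_mul]

lemma natDegree_imP_le (p : Polynomial ℝ) : (imP p).natDegree ≤ p.natDegree :=
  natDegree_le_iff_coeff_eq_zero.mpr fun N hN => by
    rw [coeff_imP, p.coeff_eq_zero_of_natDegree_lt hN, zero_mul]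

lemma evalI_eq (p : Polynomial ℝ) (ω : ℝ) :
    evalI p ω = Complex.ofReal ((reP p).eval ω) + Complex.ofReal ((imP p).eval ω) * Complex.I := by
  have hre : Complex.ofReal ((reP p).eval ω) =
      ∑ k ∈ Finset.range (p.natDegree + 1),
        ((p.coeff k * (Complex.I ^ k).re : ℝ) : ℂ) * (ω : ℂ) ^ k := by
    rw [reP, eval_finset_sum]
    push_cast
    simp
  have him : Complex.ofReal ((imP p).eval ω) =
      ∑ k ∈ Finset.range (p.natDegree + 1),
        ((p.coeff k * (Complex.I ^ k).im : ℝ) : ℂ) * (ω : ℂ) ^ k := by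
    rw [imP, eval_finset_sum]
    push_cast
    simp
  rw [evalI, p.aeval_eq_sum_range, hre, him, Finset.sum_mul, ← Finset.sum_add_distrib]
  refine Finset.sum_congr rfl fun k _ => ?_
  have hk : (Complex.I ^ k) =
      ((Complex.I ^ k).re : ℂ) + ((Complex.I ^ k).im : ℂ) * Complex.I :=
    ((Complex.I ^ k).re_add_im).symm
  simp only [Complex.real_smul, mul_pow, eval_mul, eval_C, eval_pow, eval_X]
  push_cast
  linear_combination ((p.coeff k : ℂ) * (ω : ℂ) ^ k) * hk

lemma evalI_re (p : Polynomial ℝ) (ω : ℝ) : (evalI p ω).re = (reP p).eval ω := by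
  rw [evalI_eq]; simp

lemma evalI_im (p : Polynomial ℝ) (ω : ℝ) : (evalI p ω).im = (imP p).eval ω := by
  rw [evalI_eq]; simp

lemma div_re_eq (p q : Polynomial ℝ) (ω : ℝ) :
    (evalI p ω / evalI q ω).re =
      (reP p * reP q + imP p * imP q).eval ω / Complex.normSq (evalI q ω) := by
  rw [Complex.div_re, eval_add, eval_mul, eval_mul, ← evalI_re, ← evalI_re, ← evalI_im,
    ← evalI_im]
  ring

lemma evalI_ne_zero (q : Polynomial ℝ) (hq : HurwitzStable q) (ω : ℝ) : evalI q ω ≠ 0 := by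
  intro h0
  have := hq _ h0
  simp [Complex.mul_re] at this

lemma continuous_evalI (p : Polynomial ℝ) : Continuous (evalI p) :=
  (p.continuous_aeval).comp (Complex.continuous_ofReal.mul continuous_const)

lemma key (n : ℕ) (hn : 1 ≤ n) (a c h : Polynomial ℝ)
    (hamon : a.Monic) (hadeg : a.natDegree = n) (haH : HurwitzStable a)
    (hcpos : ∀ ω : ℝ, 0 < (evalI c ω / evalI a ω).re)
    (hhmon : h.Monic) (hhdeg : h.natDegree = n) :
    ∃ δ0 > (0:ℝ), ∀ δ : ℝ, 0 < δ → δ ≤ δ0 →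
      ∀ ω : ℝ, 0 < (evalI (c + C δ * h) ω / evalI a ω).re := by
  classical
  set G : Polynomial ℝ := reP h * reP a + imP h * imP a with hGdef
  have hha : h.coeff n = 1 := by rw [← hhdeg]; exact hhmon.coeff_natDegree
  have haa : a.coeff n = 1 := by rw [← hadeg]; exact hamon.coeff_natDegree
  have hnormSqI : (Complex.I ^ n).re * (Complex.I ^ n).re
      + (Complex.I ^ n).im * (Complex.I ^ n).im = 1 := by
    have h1 : Complex.normSq (Complex.I ^ n) = 1 := by simp
    simpa [Complex.normSq_apply] using h1
  have hGcoeff : G.coeff (n + n) = 1 := by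
    rw [hGdef, coeff_add,
      coeff_mul_add_eq_of_natDegree_le ((natDegree_reP_le h).trans hhdeg.le)
        ((natDegree_reP_le a).trans hadeg.le),
      coeff_mul_add_eq_of_natDegree_le ((natDegree_imP_le h).trans hhdeg.le)
        ((natDegree_imP_le a).trans hadeg.le),
      coeff_reP, coeff_reP, coeff_imP, coeff_imP, hha, haa]
    linear_combination hnormSqI
  have hGdegle : G.natDegree ≤ n + n := by
    refine (natDegree_add_le _ _).trans (max_le ?_ ?_)
    · exact natDegree_mul_le.trans (add_le_add ((natDegree_reP_le h).trans hhdeg.le)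
        ((natDegree_reP_le a).trans hadeg.le))
    · exact natDegree_mul_le.trans (add_le_add ((natDegree_imP_le h).trans hhdeg.le)
        ((natDegree_imP_le a).trans hadeg.le))
  have hGnatdeg : G.natDegree = n + n :=
    le_antisymm hGdegle (le_natDegree_of_ne_zero (by rw [hGcoeff]; norm_num))
  have hGlead : G.leadingCoeff = 1 := by rw [leadingCoeff, hGnatdeg, hGcoeff]
  have hGdegpos : 0 < G.degree := by
    rw [← natDegree_pos_iff_degree_pos, hGnatdeg]; omega
  have t1 : Filter.Tendsto (fun ω : ℝ => G.eval ω) Filter.atTop Filter.atTop :=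
    G.tendsto_atTop_of_leadingCoeff_nonneg hGdegpos (by rw [hGlead]; norm_num)
  set G' : Polynomial ℝ := G.comp (-X) with hG'
  have hXdeg : (-X : Polynomial ℝ).natDegree = 1 := by simp
  have hG'lead : G'.leadingCoeff = 1 := by
    rw [hG', leadingCoeff_comp (by rw [hXdeg]; omega), hGlead, leadingCoeff_neg,
      leadingCoeff_X, hGnatdeg, one_mul]
    exact Even.neg_one_pow ⟨n, rfl⟩
  have hG'degpos : 0 < G'.degree := by
    rw [← natDegree_pos_iff_degree_pos, hG', natDegree_comp, hXdeg, hGnatdeg]; omega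
  have t2 : Filter.Tendsto (fun ω : ℝ => G'.eval ω) Filter.atTop Filter.atTop :=
    G'.tendsto_atTop_of_leadingCoeff_nonneg hG'degpos (by rw [hG'lead]; norm_num)
  obtain ⟨R₀, hR₀⟩ := Filter.eventually_atTop.mp
    ((t1.eventually_ge_atTop 0).and (t2.eventually_ge_atTop 0))
  set R : ℝ := max R₀ 0 with hRdef
  have hR0 : (0:ℝ) ≤ R := le_max_right _ _
  have hGnonneg : ∀ ω : ℝ, R ≤ |ω| → 0 ≤ G.eval ω := by
    intro ω hω
    rcases le_total 0 ω with h0 | h0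
    · rw [_root_.abs_of_nonneg h0] at hω
      exact (hR₀ ω ((le_max_left _ _).trans hω)).1
    · rw [_root_.abs_of_nonpos h0] at hω
      have h2 := (hR₀ (-ω) ((le_max_left _ _).trans hω)).2
      simpa [hG', eval_comp] using h2
  have hane := evalI_ne_zero a haH
  have hcont : ∀ p : Polynomial ℝ, Continuous fun ω => (evalI p ω / evalI a ω).re := fun p =>
    Complex.continuous_re.comp ((continuous_evalI p).div (continuous_evalI a) hane)
  set g : ℝ → ℝ := fun ω => (evalI c ω / evalI a ω).re with hgdef
  set f : ℝ → ℝ := fun ω => (evalI h ω / evalI a ω).re with hfdef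
  have hKne : (Set.Icc (-R) R).Nonempty := Set.nonempty_Icc.mpr (by linarith)
  obtain ⟨ω₁, hω₁K, hω₁⟩ := isCompact_Icc.exists_isMinOn hKne (hcont c).continuousOn
  obtain ⟨ω₂, hω₂K, hω₂⟩ := isCompact_Icc.exists_isMinOn hKne (hcont h).continuousOn
  have hm : 0 < g ω₁ := hcpos ω₁
  set m : ℝ := g ω₁ with hmdef
  set l : ℝ := f ω₂ with hldef
  refine ⟨m / (2 * (|l| + 1)), by positivity, ?_⟩
  intro δ hδ hδle ω
  have hsplit : (evalI (c + C δ * h) ω / evalI a ω).re = g ω + δ * f ω := by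
    have heq : evalI (c + C δ * h) ω = evalI c ω + (δ : ℂ) * evalI h ω := by
      simp [evalI, map_add, map_mul, Polynomial.aeval_C, Complex.coe_algebraMap]
    rw [heq, add_div, mul_div_assoc, Complex.add_re, Complex.re_ofReal_mul, hgdef, hfdef]
  rw [hsplit]
  by_cases hωR : R ≤ |ω|
  · have hf0 : 0 ≤ f ω := by
      rw [hfdef]
      simp only
      rw [div_re_eq h a ω, ← hGdef]
      exact div_nonneg (hGnonneg ω hωR) (Complex.normSq_nonneg _)
    have hg0 := hcpos ω
    have : 0 ≤ δ * f ω := mul_nonneg hδ.le hf0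
    have hgo : 0 < g ω := hg0
    linarith
  · have hωK : ω ∈ Set.Icc (-R) R := by
      push_neg at hωR
      obtain ⟨h1, h2⟩ := abs_lt.mp hωR
      exact ⟨h1.le, h2.le⟩
    have h1 : m ≤ g ω := hω₁ hωK
    have h2 : l ≤ f ω := hω₂ hωK
    have hl : -|l| ≤ l := neg_abs_le l
    have habs : (0:ℝ) ≤ |l| := abs_nonneg l
    have hδb : δ * (|l| + 1) ≤ m / 2 := by
      rw [le_div_iff₀ (by positivity)] at hδle
      linarith
    nlinarith [mul_le_mul_of_nonneg_left h2 hδ.le]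

def SPR (p q : Polynomial ℝ) : Prop :=
  p.degree = q.degree ∧ HurwitzStable q ∧
    ∀ ω : ℝ, 0 < (evalI p ω / evalI q ω).re

theorem spr_perturbation_pair (n : ℕ) (hn : 1 ≤ n) (a b c h : Polynomial ℝ)
    (hamon : a.Monic) (hadeg : a.natDegree = n) (haH : HurwitzStable a)
    (hbmon : b.Monic) (hbdeg : b.natDegree = n) (hbH : HurwitzStable b)
    (hcmon : c.Monic) (hcdeg : c.natDegree = n - 1)
    (hposa : ∀ ω : ℝ, 0 < (evalI c ω / evalI a ω).re)
    (hposb : ∀ ω : ℝ, 0 < (evalI c ω / evalI b ω).re)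
    (hhmon : h.Monic) (hhdeg : h.natDegree = n) :
    ∃ δ > (0 : ℝ),
      SPR (c + Polynomial.C δ * h) a ∧ SPR (c + Polynomial.C δ * h) b := by
  obtain ⟨δa, hδa0, hδa⟩ := key n hn a c h hamon hadeg haH hposa hhmon hhdeg
  obtain ⟨δb, hδb0, hδb⟩ := key n hn b c h hbmon hbdeg hbH hposb hhmon hhdeg
  set δ : ℝ := min δa δb with hδdef
  have hδ0 : 0 < δ := lt_min hδa0 hδb0
  have hdegCh : (C δ * h).degree = (n : WithBot ℕ) := by
    rw [degree_mul, degree_C hδ0.ne', zero_add, degree_eq_natDegree hhmon.ne_zero, hhdeg]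
  have hdegc : c.degree < (C δ * h).degree := by
    rw [hdegCh, degree_eq_natDegree hcmon.ne_zero, hcdeg]
    exact_mod_cast Nat.sub_lt (by omega) one_pos
  have hdegsum : (c + C δ * h).degree = (n : WithBot ℕ) := by
    rw [degree_add_eq_right_of_degree_lt hdegc, hdegCh]
  refine ⟨δ, hδ0, ⟨?_, haH, fun ω => hδa δ hδ0 (min_le_left _ _) ω⟩,
    ⟨?_, hbH, fun ω => hδb δ hδ0 (min_le_right _ _) ω⟩⟩
  · rw [hdegsum, degree_eq_natDegree hamon.ne_zero, hadeg]
  · rw [hdegsum, degree_eq_natDegree hbmon.ne_zero, hbdeg]
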